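/- If L is an odd list (all nonzero entries are odd) and the simple list 1(L) = (l_{ij} mod 2) is feasible, then L is feasible. -/
import Mathlib


open Finset

/-- Two permutations are adjacent if every element's position changes by at most one. -/
def Adjacent {n : ℕ} (π σ : Equiv.Perm (Fin n)) : Prop :=
  ∀ i, ((π i : ℤ) - (σ i : ℤ)).natAbs ≤ 1

/-- Number of times wires `i` and `j` swap in the sequence `T` of height `h`. -/
def SwapCount {n : ℕ} (T : ℕ → Equiv.Perm (Fin n)) (h : ℕ) (i j : Fin n) : ℕ :=
  ((Finset.range (h - 1)).filter fun t => T t i = T (t+1) j ∧ T t j = T (t+1) i).card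

/-- A tangle of height `h`: a nonempty sequence of permutations with consecutive ones adjacent. -/
def IsTangle {n : ℕ} (T : ℕ → Equiv.Perm (Fin n)) (h : ℕ) : Prop :=
  1 ≤ h ∧ ∀ t, t + 1 < h → Adjacent (T t) (T (t+1))

/-- A tangle starting at the identity realizing the list `l`. -/
def Realizes {n : ℕ} (T : ℕ → Equiv.Perm (Fin n)) (h : ℕ) (l : Fin n → Fin n → ℕ) : Prop :=
  IsTangle T h ∧ T 0 = 1 ∧ ∀ i j, i ≠ j → SwapCount T h i j = l i j

/-- A list is feasible if some tangle starting at the identity realizes it. -/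
def Feasible {n : ℕ} (l : Fin n → Fin n → ℕ) : Prop :=
  ∃ h T, Realizes T h l

/-- A list is consistent if the map `id_n L` is a permutation of `[n]`. -/
def Consistent {n : ℕ} (l : Fin n → Fin n → ℕ) : Prop :=
  ∃ ρ : Equiv.Perm (Fin n), ∀ i : Fin n,
    ((i : ℤ) + ((Finset.univ.filter fun j => i < j ∧ Odd (l i j)).card : ℤ)
      - ((Finset.univ.filter fun j => j < i ∧ Odd (l i j)).card : ℤ)) = (ρ i : ℤ)

lemma count_insert (F G : ℕ → Prop) [DecidablePred F] [DecidablePred G]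
    (t h : ℕ) (htlt : t < h - 1) (hh : 1 ≤ h)
    (h1 : ∀ s, s < t → (F s ↔ G s))
    (h2 : ∀ s, t ≤ s → s < h - 1 → (F (s+2) ↔ G s))
    (p : Prop) [Decidable p] (hFt : F t ↔ p) (hFt1 : F (t+1) ↔ p) :
    ((range (h+1)).filter F).card
      = ((range (h-1)).filter G).card + if p then 2 else 0 := by
  have hth : t + 2 ≤ h + 1 := by omega
  have hsplit : range (h+1) = (range t ∪ Ico t (t+2)) ∪ Ico (t+2) (h+1) := by
    ext s; simp only [mem_range, mem_union, mem_Ico]; omega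
  have hd1 : Disjoint (range t) (Ico t (t+2)) := by
    rw [Finset.disjoint_left]; intro s hA hB
    simp only [mem_range] at hA; simp only [mem_Ico] at hB; omega
  have hd2 : Disjoint (range t ∪ Ico t (t+2)) (Ico (t+2) (h+1)) := by
    rw [Finset.disjoint_left]; intro s hA hB
    simp only [mem_union, mem_range, mem_Ico] at hA hB; omega
  have c1 : (range t).filter F = (range t).filter G := by
    apply Finset.filter_congr
    intro s hs
    simp only [mem_range] at hs
    exact h1 s hs
  have hico2 : Ico t (t+2) = {t, t+1} := by
    ext s; simp only [mem_Ico, mem_insert, mem_singleton]; omega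
  have c2 : ((Ico t (t+2)).filter F).card = if p then 2 else 0 := by
    rw [hico2]
    by_cases hp : p
    · rw [if_pos hp, Finset.filter_true_of_mem]
      · simp
      · intro s hs
        simp only [mem_insert, mem_singleton] at hs
        rcases hs with rfl | rfl
        · exact hFt.mpr hp
        · exact hFt1.mpr hp
    · rw [if_neg hp, Finset.filter_false_of_mem]
      · simp
      · intro s hs
        simp only [mem_insert, mem_singleton] at hs
        rcases hs with rfl | rfl
        · exact fun hc => hp (hFt.mp hc)
        · exact fun hc => hp (hFt1.mp hc)
  have c3 : ((Ico (t+2) (h+1)).filter F).card = ((Ico t (h-1)).filter G).card := by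
    have hmap : Ico (t+2) (h+1) = Finset.map (addRightEmbedding 2) (Ico t (h-1)) := by
      rw [Finset.map_add_right_Ico]
      have e : h - 1 + 2 = h + 1 := by omega
      rw [e]
    rw [hmap, Finset.filter_map, Finset.card_map]
    congr 1
    apply Finset.filter_congr
    intro s hs
    simp only [mem_Ico] at hs
    show F (s + 2) ↔ G s
    exact h2 s hs.1 hs.2
  have hGsplit : ((range (h-1)).filter G).card
      = ((range t).filter G).card + ((Ico t (h-1)).filter G).card := by
    have hsp : range (h-1) = range t ∪ Ico t (h-1) := by
      ext s; simp only [mem_range, mem_union, mem_Ico]; omega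
    rw [hsp, Finset.filter_union, Finset.card_union_of_disjoint]
    rw [Finset.disjoint_left]
    intro s hA hB
    simp only [mem_filter, mem_range, mem_Ico] at hA hB
    omega
  have hd1' : Disjoint ((range t).filter F) ((Ico t (t+2)).filter F) :=
    Finset.disjoint_filter_filter hd1
  have hd2' : Disjoint ((range t).filter F ∪ (Ico t (t+2)).filter F)
      ((Ico (t+2) (h+1)).filter F) := by
    rw [← Finset.filter_union]; exact Finset.disjoint_filter_filter hd2
  rw [hsplit, Finset.filter_union, Finset.filter_union,
    Finset.card_union_of_disjoint hd2', Finset.card_union_of_disjoint hd1',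
    c1, c2, c3, hGsplit]
  omega

set_option maxHeartbeats 1600000 in
lemma insert_step {n : ℕ} (l : Fin n → Fin n → ℕ) (i j : Fin n) (hij : i ≠ j)
    (hpos : 1 ≤ l i j) (hf : Feasible l) :
    Feasible (fun a b => l a b + if (a = i ∧ b = j) ∨ (a = j ∧ b = i) then 2 else 0) := by
  obtain ⟨h, T, ⟨hh, hadj⟩, hT0, hcount⟩ := hf
  have hone : 0 < SwapCount T h i j := by rw [hcount i j hij]; omega
  obtain ⟨t, ht⟩ := Finset.card_pos.mp hone
  simp only [Finset.mem_filter, Finset.mem_range] at ht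
  obtain ⟨htlt, hs1, hs2⟩ := ht
  set σ' : Equiv.Perm (Fin n) := (Equiv.swap i j).trans (T t) with hσ'
  have hadj_t : Adjacent (T t) (T (t+1)) := hadj t (by omega)
  have A1 : Adjacent (T t) σ' := by
    intro a
    simp only [hσ', Equiv.trans_apply]
    by_cases hai : a = i
    · subst hai
      rw [Equiv.swap_apply_left]
      have := hadj_t a
      rw [← hs2] at this
      exact this
    · by_cases haj : a = j
      · subst haj
        rw [Equiv.swap_apply_right]
        have := hadj_t a
        rw [← hs1] at this
        exact this
      · rw [Equiv.swap_apply_of_ne_of_ne hai haj, sub_self]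
        simp
  have A2 : Adjacent σ' (T t) := by
    intro a
    rw [← Int.natAbs_neg, neg_sub]
    exact A1 a
  have key1 : ∀ a b : Fin n, a ≠ b →
      ((T t a = σ' b ∧ T t b = σ' a) ↔ ((a = i ∧ b = j) ∨ (a = j ∧ b = i))) := by
    intro a b hab
    simp only [hσ', Equiv.trans_apply, EmbeddingLike.apply_eq_iff_eq]
    constructor
    · rintro ⟨h1, h2⟩
      by_cases hbi : b = i
      · subst hbi
        rw [Equiv.swap_apply_left] at h1
        exact Or.inr ⟨h1, rfl⟩
      · by_cases hbj : b = j
        · subst hbj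
          rw [Equiv.swap_apply_right] at h1
          exact Or.inl ⟨h1, rfl⟩
        · rw [Equiv.swap_apply_of_ne_of_ne hbi hbj] at h1
          exact absurd h1 hab
    · rintro (⟨rfl, rfl⟩ | ⟨rfl, rfl⟩) <;> simp
  have key2 : ∀ a b : Fin n, a ≠ b →
      ((σ' a = T t b ∧ σ' b = T t a) ↔ ((a = i ∧ b = j) ∨ (a = j ∧ b = i))) := by
    intro a b hab
    rw [← key1 a b hab]
    constructor
    · rintro ⟨h1, h2⟩; exact ⟨h2.symm, h1.symm⟩
    · rintro ⟨h1, h2⟩; exact ⟨h2.symm, h1.symm⟩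
  set T' : ℕ → Equiv.Perm (Fin n) :=
    fun s => if s ≤ t then T s else if s = t + 1 then σ' else T (s - 2) with hT'
  have hT'le : ∀ s, s ≤ t → T' s = T s := by
    intro s hs; simp [hT', hs]
  have hT't1 : T' (t + 1) = σ' := by simp [hT']
  have hT'ge : ∀ s, t + 2 ≤ s → T' s = T (s - 2) := by
    intro s hs
    have h1 : ¬ s ≤ t := by omega
    have h2 : s ≠ t + 1 := by omega
    simp [hT', h1, h2]
  refine ⟨h + 2, T', ⟨by omega, ?_⟩, ?_, ?_⟩
  · intro s hs
    by_cases h1 : s + 1 ≤ t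
    · rw [hT'le s (by omega), hT'le (s+1) h1]
      exact hadj s (by omega)
    · by_cases h2 : s = t
      · subst h2
        rw [hT'le s le_rfl, hT't1]
        exact A1
      · by_cases h3 : s = t + 1
        · subst h3
          rw [hT't1, hT'ge (t + 2) le_rfl]
          simpa using A2
        · have h4 : t + 2 ≤ s := by omega
          rw [hT'ge s h4, hT'ge (s + 1) (by omega)]
          have h5 : s + 1 - 2 = (s - 2) + 1 := by omega
          rw [h5]
          exact hadj (s - 2) (by omega)
  · rw [hT'le 0 (Nat.zero_le t), hT0]
  · intro a b hab
    have := count_insert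
      (fun s => T' s a = T' (s+1) b ∧ T' s b = T' (s+1) a)
      (fun s => T s a = T (s+1) b ∧ T s b = T (s+1) a)
      t h htlt hh
      (fun s hs => by
        show T' s a = T' (s+1) b ∧ T' s b = T' (s+1) a ↔
          T s a = T (s+1) b ∧ T s b = T (s+1) a
        rw [hT'le s (by omega), hT'le (s+1) (by omega)])
      (fun s hs1' hs2' => by
        show T' (s+2) a = T' (s+2+1) b ∧ T' (s+2) b = T' (s+2+1) a ↔
          T s a = T (s+1) b ∧ T s b = T (s+1) a
        rw [hT'ge (s+2) (by omega), hT'ge (s+2+1) (by omega)]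
        have e2 : s + 2 - 2 = s := by omega
        have e3 : s + 2 + 1 - 2 = s + 1 := by omega
        rw [e2, e3])
      ((a = i ∧ b = j) ∨ (a = j ∧ b = i))
      (by
        show T' t a = T' (t+1) b ∧ T' t b = T' (t+1) a ↔ _
        rw [hT'le t le_rfl, hT't1]; exact key1 a b hab)
      (by
        have e4 : T' (t + 1 + 1) = T t := by rw [hT'ge (t+2) le_rfl]; simp
        show T' (t+1) a = T' (t+1+1) b ∧ T' (t+1) b = T' (t+1+1) a ↔ _
        rw [hT't1, e4]; exact key2 a b hab)
    show SwapCount T' (h+2) a b = l a b + if (a = i ∧ b = j) ∨ (a = j ∧ b = i) then 2 else 0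
    have hc : SwapCount T h a b = l a b := hcount a b hab
    unfold SwapCount at hc ⊢
    have hh2 : h + 2 - 1 = h + 1 := by omega
    rw [hh2]
    rw [this, hc]

lemma main_aux {n : ℕ} : ∀ N (l : Fin n → Fin n → ℕ), (∑ x, ∑ y, l x y) ≤ N →
    (∀ i j, l i j = l j i) → (∀ i, l i i = 0) →
    (∀ i j, l i j ≠ 0 → Odd (l i j)) →
    Feasible (fun i j => l i j % 2) → Feasible l := by
  intro N
  induction N with
  | zero =>
    intro l hsum hsym hdiag hodd hf
    have hall : ∀ i j, l i j ≤ 1 := by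
      intro i j
      have h1 : l i j ≤ ∑ y, l i y :=
        Finset.single_le_sum (fun y _ => Nat.zero_le _) (Finset.mem_univ j)
      have h2 : (∑ y, l i y) ≤ ∑ x, ∑ y, l x y :=
        Finset.single_le_sum (f := fun x => ∑ y, l x y)
          (fun x _ => Nat.zero_le _) (Finset.mem_univ i)
      omega
    have : (fun i j => l i j % 2) = l := by
      funext i j
      exact Nat.mod_eq_of_lt (by have := hall i j; omega)
    rwa [this] at hf
  | succ N ih =>
    intro l hsum hsym hdiag hodd hf
    by_cases hsmall : ∀ i j, l i j ≤ 1
    · have : (fun i j => l i j % 2) = l := by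
        funext i j
        exact Nat.mod_eq_of_lt (by have := hsmall i j; omega)
      rwa [this] at hf
    · push_neg at hsmall
      obtain ⟨i, j, hbig⟩ := hsmall
      have hij : i ≠ j := by
        rintro rfl
        rw [hdiag i] at hbig
        omega
      set l₂ : Fin n → Fin n → ℕ :=
        fun a b => l a b - if (a = i ∧ b = j) ∨ (a = j ∧ b = i) then 2 else 0 with hl₂
      have hcond : ∀ a b : Fin n, ((a = i ∧ b = j) ∨ (a = j ∧ b = i)) → l a b = l i j := by
        rintro a b (⟨rfl, rfl⟩ | ⟨rfl, rfl⟩)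
        · rfl
        · exact hsym a b
      have hval : ∀ a b : Fin n, l₂ a b =
          l a b - if (a = i ∧ b = j) ∨ (a = j ∧ b = i) then 2 else 0 := fun a b => rfl
      have hF2 : Feasible l₂ := by
        apply ih
        · -- sum decreases
          have hlt : (∑ x, ∑ y, l₂ x y) < ∑ x, ∑ y, l x y := by
            apply Finset.sum_lt_sum
            · intro x _
              apply Finset.sum_le_sum
              intro y _
              rw [hval]
              omega
            · refine ⟨i, Finset.mem_univ i, ?_⟩
              apply Finset.sum_lt_sum
              · intro y _
                rw [hval]
                omega
              · refine ⟨j, Finset.mem_univ j, ?_⟩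
                rw [hval i j, if_pos (Or.inl ⟨rfl, rfl⟩)]
                omega
          omega
        · intro a b
          rw [hval, hval, hsym a b]
          congr 1
          by_cases hp : (a = i ∧ b = j) ∨ (a = j ∧ b = i)
          · rw [if_pos hp, if_pos (by tauto)]
          · rw [if_neg hp, if_neg (by tauto)]
        · intro a
          rw [hval, hdiag a]
          simp
        · intro a b hne
          rw [hval] at hne ⊢
          by_cases hp : (a = i ∧ b = j) ∨ (a = j ∧ b = i)
          · rw [if_pos hp] at hne ⊢
            have he : l a b = l i j := hcond a b hp
            obtain ⟨k, hk⟩ := hodd a b (by omega)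
            exact ⟨k - 1, by omega⟩
          · rw [if_neg hp] at hne ⊢
            exact hodd a b hne
        · have : (fun a b => l₂ a b % 2) = (fun a b => l a b % 2) := by
            funext a b
            rw [hval]
            by_cases hp : (a = i ∧ b = j) ∨ (a = j ∧ b = i)
            · rw [if_pos hp]
              have he : l a b = l i j := hcond a b hp
              omega
            · rw [if_neg hp]
              omega
          rwa [this]
      have hpos2 : 1 ≤ l₂ i j := by
        rw [hval, if_pos (Or.inl ⟨rfl, rfl⟩)]
        obtain ⟨k, hk⟩ := hodd i j (by omega)
        omega
      have := insert_step l₂ i j hij hpos2 hF2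
      have he : (fun a b => l₂ a b + if (a = i ∧ b = j) ∨ (a = j ∧ b = i) then 2 else 0) = l := by
        funext a b
        rw [hval]
        by_cases hp : (a = i ∧ b = j) ∨ (a = j ∧ b = i)
        · rw [if_pos hp]
          have := hcond a b hp
          omega
        · rw [if_neg hp]
          omega
      rwa [he] at this


/-- If L is an odd list and 1(L) is feasible, then L is feasible. -/
theorem odd_list_feasible_of_parity_feasible (n : ℕ) (l : Fin n → Fin n → ℕ)
    (hsym : ∀ i j, l i j = l j i) (hdiag : ∀ i, l i i = 0)
    (hodd : ∀ i j, l i j ≠ 0 → Odd (l i j))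
    (hf : Feasible (fun i j => l i j % 2)) :
    Feasible l :=
  main_aux (∑ x, ∑ y, l x y) l le_rfl hsym hdiag hodd hf
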